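/- Let X be a real normed space and let x, y ∈ X be nonzero vectors. Then the function φ(t) := ‖(x − y) + t·(x/‖x‖ − y/‖y‖)‖ is monotone nondecreasing on the interval [−min(‖x‖, ‖y‖), +∞). In particular, ‖(x − y) + t·(x/‖x‖ − y/‖y‖)‖ ≥ ‖x − y‖ for all t ≥ 0 (semi-monotonicity of the radial projection x ↦ x/‖x‖). -/

import Mathlib

/-- Semi-monotonicity of the radial projection: for nonzero `x, y` in a normed space,
`t ↦ ‖(x - y) + t • (x/‖x‖ - y/‖y‖)‖` is nondecreasing on `[-min ‖x‖ ‖y‖, ∞)`; in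
particular `‖(x - y) + t • (x/‖x‖ - y/‖y‖)‖ ≥ ‖x - y‖` for all `t ≥ 0`. -/
theorem stmt_11 {X : Type*} [NormedAddCommGroup X] [NormedSpace ℝ X]
    (x y : X) (hx : x ≠ 0) (hy : y ≠ 0) :
    MonotoneOn (fun t : ℝ => ‖(x - y) + t • (‖x‖⁻¹ • x - ‖y‖⁻¹ • y)‖)
        (Set.Ici (-(min ‖x‖ ‖y‖))) ∧
      ∀ t : ℝ, 0 ≤ t → ‖x - y‖ ≤ ‖(x - y) + t • (‖x‖⁻¹ • x - ‖y‖⁻¹ • y)‖ := by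
  set a := ‖x‖ with ha'
  set b := ‖y‖ with hb'
  have ha : 0 < a := norm_pos_iff.mpr hx
  have hb : 0 < b := norm_pos_iff.mpr hy
  set m := min a b with hm'
  have hma : m ≤ a := min_le_left a b
  have hmb : m ≤ b := min_le_right a b
  have hm : 0 < m := lt_min ha hb
  -- rewrite the vector
  have hv : ∀ t : ℝ, (x - y) + t • (a⁻¹ • x - b⁻¹ • y)
      = (1 + t * a⁻¹) • x - (1 + t * b⁻¹) • y := by
    intro t; module
  -- lower bound for all t ≥ -m
  have hlow : ∀ t : ℝ, -m ≤ t → |a - b| ≤ ‖(x - y) + t • (a⁻¹ • x - b⁻¹ • y)‖ := by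
    intro t ht
    rw [hv t]
    have hα : 0 ≤ 1 + t * a⁻¹ := by
      have : -a ≤ t := le_trans (neg_le_neg hma) ht
      nlinarith [mul_pos ha (inv_pos.mpr ha), mul_inv_cancel₀ ha.ne']
    have hβ : 0 ≤ 1 + t * b⁻¹ := by
      have : -b ≤ t := le_trans (neg_le_neg hmb) ht
      nlinarith [mul_pos hb (inv_pos.mpr hb), mul_inv_cancel₀ hb.ne']
    have h1 : ‖(1 + t * a⁻¹) • x‖ = a + t := by
      rw [norm_smul, Real.norm_eq_abs, abs_of_nonneg hα, ← ha']
      field_simp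
    have h2 : ‖(1 + t * b⁻¹) • y‖ = b + t := by
      rw [norm_smul, Real.norm_eq_abs, abs_of_nonneg hβ, ← hb']
      field_simp
    calc |a - b| = |‖(1 + t * a⁻¹) • x‖ - ‖(1 + t * b⁻¹) • y‖| := by
          rw [h1, h2]; ring_nf
      _ ≤ ‖(1 + t * a⁻¹) • x - (1 + t * b⁻¹) • y‖ := abs_norm_sub_norm_le _ _
  -- the value at -m
  have hend : ‖(x - y) + (-m) • (a⁻¹ • x - b⁻¹ • y)‖ = |a - b| := by
    rw [hv (-m)]
    rcases min_cases a b with ⟨hma', hab⟩ | ⟨hmb', hab⟩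
    · have h0 : (1 : ℝ) + (-m) * a⁻¹ = 0 := by
        rw [hm', hma']; field_simp; norm_num
      rw [h0, zero_smul, zero_sub, norm_neg, norm_smul, Real.norm_eq_abs, ← hb']
      rw [hm', hma']
      have : |1 + -a * b⁻¹| = (b - a) / b := by
        rw [abs_of_nonneg]
        · field_simp; ring
        · have : a * b⁻¹ ≤ 1 := by
            rw [mul_inv_le_iff₀ hb, one_mul]; exact hab
          linarith
      rw [this, abs_of_nonpos (by linarith)]
      field_simp; ring
    · have h0 : (1 : ℝ) + (-m) * b⁻¹ = 0 := by
        rw [hm', hmb']; field_simp; norm_num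
      rw [h0, zero_smul, sub_zero, norm_smul, Real.norm_eq_abs, ← ha']
      rw [hm', hmb']
      have : |1 + -b * a⁻¹| = (a - b) / a := by
        rw [abs_of_nonneg]
        · field_simp; ring
        · have : b * a⁻¹ ≤ 1 := by
            rw [mul_inv_le_iff₀ ha, one_mul]; exact hab.le
          linarith
      rw [this, abs_of_nonneg (by linarith : (0:ℝ) ≤ a - b)]
      field_simp
  -- monotonicity
  have hmono : MonotoneOn (fun t : ℝ => ‖(x - y) + t • (a⁻¹ • x - b⁻¹ • y)‖)
      (Set.Ici (-m)) := by
    intro s hs t ht hst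
    rcases eq_or_lt_of_le hst with rfl | hst'
    · exact le_rfl
    have htm : 0 < t + m := by
      have : -m ≤ s := hs
      linarith [Set.mem_Ici.mp hs]
    set θ : ℝ := (s + m) / (t + m) with hθ'
    have hθ0 : 0 ≤ θ := div_nonneg (by linarith [Set.mem_Ici.mp hs]) htm.le
    have hθ1 : θ ≤ 1 := by
      rw [hθ', div_le_one htm]; linarith
    have hθeq : θ * (t + m) = s + m := by
      rw [hθ']; field_simp
    clear_value θ
    have hc1 : 1 + s * a⁻¹ = θ * (1 + t * a⁻¹) + (1 - θ) * (1 + (-m) * a⁻¹) := by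
      linear_combination (-a⁻¹) * hθeq
    have hc2 : 1 + s * b⁻¹ = θ * (1 + t * b⁻¹) + (1 - θ) * (1 + (-m) * b⁻¹) := by
      linear_combination (-b⁻¹) * hθeq
    have hcomb : (x - y) + s • (a⁻¹ • x - b⁻¹ • y)
        = θ • ((x - y) + t • (a⁻¹ • x - b⁻¹ • y))
          + (1 - θ) • ((x - y) + (-m) • (a⁻¹ • x - b⁻¹ • y)) := by
      rw [hv s, hv t, hv (-m), hc1, hc2]
      module
    calc ‖(x - y) + s • (a⁻¹ • x - b⁻¹ • y)‖
        = ‖θ • ((x - y) + t • (a⁻¹ • x - b⁻¹ • y))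
            + (1 - θ) • ((x - y) + (-m) • (a⁻¹ • x - b⁻¹ • y))‖ := by rw [hcomb]
      _ ≤ ‖θ • ((x - y) + t • (a⁻¹ • x - b⁻¹ • y))‖
            + ‖(1 - θ) • ((x - y) + (-m) • (a⁻¹ • x - b⁻¹ • y))‖ := norm_add_le _ _
      _ = θ * ‖(x - y) + t • (a⁻¹ • x - b⁻¹ • y)‖
            + (1 - θ) * ‖(x - y) + (-m) • (a⁻¹ • x - b⁻¹ • y)‖ := by
          rw [norm_smul, norm_smul, Real.norm_eq_abs, Real.norm_eq_abs,
            abs_of_nonneg hθ0, abs_of_nonneg (by linarith : (0:ℝ) ≤ 1 - θ)]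
      _ ≤ θ * ‖(x - y) + t • (a⁻¹ • x - b⁻¹ • y)‖
            + (1 - θ) * ‖(x - y) + t • (a⁻¹ • x - b⁻¹ • y)‖ := by
          have := hlow t (Set.mem_Ici.mp ht)
          rw [hend]
          nlinarith
      _ = ‖(x - y) + t • (a⁻¹ • x - b⁻¹ • y)‖ := by ring
  refine ⟨hmono, fun t ht => ?_⟩
  have h0 : (-m : ℝ) ≤ 0 := by linarith
  have := hmono (Set.mem_Ici.mpr h0) (Set.mem_Ici.mpr (by linarith : -m ≤ t)) ht
  simpa using this
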